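/- arXiv:2407.15752 — 3 statements merged into one kernel-verified Lean document; each statement's English description precedes it below -/
import Mathlib

section
/- For any θ₁, θ₂ ∈ [-π/2, π/2] and any phase vector Φ, the PDAF A(Φ,θ) = |Σ_{m=1}^M exp(i φ_m) exp(-i (2πΔ/λ)(m-1)(sin θ_h + sin θ))|² satisfies |A(Φ,θ₂) - A(Φ,θ₁)| ≤ ((M-1) M² π Δ / λ) |θ₂ - θ₁|; i.e., A(Φ,·) is Lipschitz continuous on [-π/2, π/2] with Lipschitz constant (M-1)M²πΔ/λ. -/
open Complex Finset

lemma exp_I_sub_exp_I_le (a b : ℝ) :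
    ‖Complex.exp (Complex.I * a) - Complex.exp (Complex.I * b)‖ ≤ |a - b| := by
  set z := Complex.exp (Complex.I * a) - Complex.exp (Complex.I * b) with hz
  have hre : z.re = Real.cos a - Real.cos b := by
    simp [hz, mul_comm Complex.I, Complex.exp_ofReal_mul_I_re]
  have him : z.im = Real.sin a - Real.sin b := by
    simp [hz, mul_comm Complex.I, Complex.exp_ofReal_mul_I_im]
  have hsq : ‖z‖ ^ 2 = (Real.cos a - Real.cos b) ^ 2 + (Real.sin a - Real.sin b) ^ 2 := by
    rw [Complex.sq_norm, Complex.normSq_apply, hre, him]; ring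
  have hcos : Real.cos (a - b) = Real.cos a * Real.cos b + Real.sin a * Real.sin b :=
    Real.cos_sub a b
  have h1 : ‖z‖ ^ 2 ≤ (a - b) ^ 2 := by
    have hb := Real.one_sub_sq_div_two_le_cos (x := a - b)
    have hpa := Real.sin_sq_add_cos_sq a
    have hpb := Real.sin_sq_add_cos_sq b
    nlinarith [hsq, hcos]
  have h0 : (0:ℝ) ≤ ‖z‖ := norm_nonneg z
  have h0' : (0:ℝ) ≤ |a - b| := abs_nonneg _
  nlinarith [_root_.sq_abs (a - b)]

lemma sin_lip (x y : ℝ) : |Real.sin x - Real.sin y| ≤ |x - y| := by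
  rw [Real.sin_sub_sin]
  have h1 : |Real.sin ((x - y) / 2)| ≤ |(x - y) / 2| := Real.abs_sin_le_abs
  have h2 : |Real.cos ((x + y) / 2)| ≤ 1 := Real.abs_cos_le_one _
  calc |2 * Real.sin ((x - y) / 2) * Real.cos ((x + y) / 2)|
      = 2 * |Real.sin ((x - y) / 2)| * |Real.cos ((x + y) / 2)| := by
        rw [abs_mul, abs_mul]; simp
    _ ≤ 2 * |(x - y) / 2| * 1 := by
        apply mul_le_mul _ h2 (abs_nonneg _) (by positivity)
        have := h1; nlinarith [abs_nonneg (Real.sin ((x-y)/2))]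
    _ = |x - y| := by rw [abs_div]; simp; ring

lemma sum_sum_abs_le (M : ℕ) :
    (∑ m ∈ Finset.range M, ∑ n ∈ Finset.range M, |(m : ℝ) - n|) ≤ (M : ℝ) ^ 2 * ((M : ℝ) - 1) / 2 := by
  induction M with
  | zero => simp
  | succ M ih =>
    have hstep : ∀ k ∈ Finset.range M, |((M : ℝ)) - (k:ℝ)| = (M : ℝ) - k := by
      intro k hk
      have : (k : ℝ) ≤ M := by exact_mod_cast (Finset.mem_range.mp hk).le
      rw [_root_.abs_of_nonneg (by linarith)]
    have hgauss : (∑ k ∈ Finset.range M, (k : ℝ)) = M * (M - 1) / 2 := by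
      have := Finset.sum_range_id_mul_two M
      have := congrArg (Nat.cast : ℕ → ℝ) this
      push_cast at this
      rcases Nat.eq_zero_or_pos M with h | h
      · subst h; simp
      · have h1 : (1:ℝ) ≤ M := by exact_mod_cast h
        rw [Nat.cast_sub h] at this
        push_cast at this
        linarith
    rw [Finset.sum_range_succ]
    have hinner : ∀ m ∈ Finset.range M,
        (∑ n ∈ Finset.range (M+1), |(m:ℝ) - n|) = (∑ n ∈ Finset.range M, |(m:ℝ) - n|) + ((M:ℝ) - m) := by
      intro m hm
      rw [Finset.sum_range_succ]
      have : (m : ℝ) ≤ M := by exact_mod_cast (Finset.mem_range.mp hm).le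
      rw [_root_.abs_of_nonpos (by linarith)]
      ring
    rw [Finset.sum_congr rfl hinner, Finset.sum_add_distrib]
    have hlast : (∑ n ∈ Finset.range (M+1), |((M:ℕ) : ℝ) - n|) = (M : ℝ) * M - M * (M-1) / 2 := by
      rw [Finset.sum_range_succ]
      rw [Finset.sum_congr rfl hstep, Finset.sum_sub_distrib, hgauss]
      simp
    have hsub : (∑ m ∈ Finset.range M, ((M:ℝ) - m)) = M * M - M * (M-1) / 2 := by
      rw [Finset.sum_sub_distrib, hgauss]; simp
    rw [hlast, hsub]
    push_cast
    have h1 : (0:ℝ) ≤ (M:ℝ) * ((M:ℝ) - 1) := by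
      rcases Nat.eq_zero_or_pos M with h | h
      · subst h; norm_num
      · have : (1:ℝ) ≤ (M:ℝ) := by exact_mod_cast h
        nlinarith
    linarith [ih]

/-- The PDAF is Lipschitz continuous on `[-π/2, π/2]` with Lipschitz constant
`(M-1)M²πΔ/λ`. -/
theorem pdaf_lipschitz (M : ℕ) (hM : 0 < M) (Δ lam θh : ℝ) (hΔ : 0 < Δ) (hlam : 0 < lam)
    (φ : ℕ → ℝ) (A : ℝ → ℝ)
    (hA : ∀ θ, A θ = ‖∑ m ∈ Finset.range M,
      Complex.exp (Complex.I *
        ((φ m - (2 * Real.pi * Δ / lam) * m * (Real.sin θh + Real.sin θ) : ℝ) : ℂ))‖ ^ 2)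
    (θ₁ θ₂ : ℝ) (h₁ : θ₁ ∈ Set.Icc (-(Real.pi / 2)) (Real.pi / 2))
    (h₂ : θ₂ ∈ Set.Icc (-(Real.pi / 2)) (Real.pi / 2)) :
    |A θ₂ - A θ₁| ≤ (((M : ℝ) - 1) * (M : ℝ) ^ 2 * Real.pi * Δ / lam) * |θ₂ - θ₁| := by
  set c : ℝ := 2 * Real.pi * Δ / lam with hc
  set f : ℝ → ℕ → ℝ := fun θ m => φ m - c * m * (Real.sin θh + Real.sin θ) with hf
  -- rewrite A θ as real part of double sum
  have key : ∀ θ, A θ = (∑ m ∈ Finset.range M, ∑ n ∈ Finset.range M,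
      Complex.exp (Complex.I * ((f θ m - f θ n : ℝ) : ℂ))).re := by
    intro θ
    rw [hA θ]
    set S : ℂ := ∑ m ∈ Finset.range M, Complex.exp (Complex.I * ((f θ m : ℝ) : ℂ)) with hS
    have habs : ‖∑ m ∈ Finset.range M,
        Complex.exp (Complex.I *
          ((φ m - (2 * Real.pi * Δ / lam) * m * (Real.sin θh + Real.sin θ) : ℝ) : ℂ))‖ ^ 2
        = ‖S‖ ^ 2 := rfl
    rw [habs, Complex.sq_norm]
    have hmc : ((S * (starRingEnd ℂ) S)).re = Complex.normSq S := by
      rw [Complex.mul_conj]; simp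
    rw [← hmc]
    congr 1
    rw [hS, map_sum, Finset.sum_mul_sum]
    apply Finset.sum_congr rfl
    intro m _
    apply Finset.sum_congr rfl
    intro n _
    rw [← Complex.exp_conj, ← Complex.exp_add]
    congr 1
    simp [Complex.ofReal_sub]
    ring
  rw [key θ₂, key θ₁]
  have hre : (∑ m ∈ Finset.range M, ∑ n ∈ Finset.range M,
        Complex.exp (Complex.I * ((f θ₂ m - f θ₂ n : ℝ) : ℂ))).re
      - (∑ m ∈ Finset.range M, ∑ n ∈ Finset.range M,
        Complex.exp (Complex.I * ((f θ₁ m - f θ₁ n : ℝ) : ℂ))).re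
      = (∑ m ∈ Finset.range M, ∑ n ∈ Finset.range M,
        (Complex.exp (Complex.I * ((f θ₂ m - f θ₂ n : ℝ) : ℂ))
          - Complex.exp (Complex.I * ((f θ₁ m - f θ₁ n : ℝ) : ℂ)))).re := by
    rw [← Complex.sub_re]
    congr 1
    rw [← Finset.sum_sub_distrib]
    apply Finset.sum_congr rfl
    intro m _
    rw [← Finset.sum_sub_distrib]
  rw [hre]
  have hsinle : |Real.sin θ₂ - Real.sin θ₁| ≤ |θ₂ - θ₁| := sin_lip θ₂ θ₁
  calc |(∑ m ∈ Finset.range M, ∑ n ∈ Finset.range M,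
        (Complex.exp (Complex.I * ((f θ₂ m - f θ₂ n : ℝ) : ℂ))
          - Complex.exp (Complex.I * ((f θ₁ m - f θ₁ n : ℝ) : ℂ)))).re|
      ≤ ‖∑ m ∈ Finset.range M, ∑ n ∈ Finset.range M,
        (Complex.exp (Complex.I * ((f θ₂ m - f θ₂ n : ℝ) : ℂ))
          - Complex.exp (Complex.I * ((f θ₁ m - f θ₁ n : ℝ) : ℂ)))‖ := Complex.abs_re_le_norm _
    _ ≤ ∑ m ∈ Finset.range M, ∑ n ∈ Finset.range M,
        ‖Complex.exp (Complex.I * ((f θ₂ m - f θ₂ n : ℝ) : ℂ))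
          - Complex.exp (Complex.I * ((f θ₁ m - f θ₁ n : ℝ) : ℂ))‖ := by
        exact (norm_sum_le _ _).trans
          (Finset.sum_le_sum fun m _ => norm_sum_le _ _)
    _ ≤ ∑ m ∈ Finset.range M, ∑ n ∈ Finset.range M,
        (c * |θ₂ - θ₁|) * |(m : ℝ) - n| := by
        apply Finset.sum_le_sum
        intro m _
        apply Finset.sum_le_sum
        intro n _
        refine (exp_I_sub_exp_I_le _ _).trans ?_
        have harg : (f θ₂ m - f θ₂ n) - (f θ₁ m - f θ₁ n)
            = -(c * ((m : ℝ) - n) * (Real.sin θ₂ - Real.sin θ₁)) := by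
          simp only [hf]; ring
        rw [harg, abs_neg, abs_mul, abs_mul]
        have hcpos : 0 < c := by positivity
        rw [abs_of_pos hcpos]
        calc c * |(m:ℝ) - n| * |Real.sin θ₂ - Real.sin θ₁|
            ≤ c * |(m:ℝ) - n| * |θ₂ - θ₁| := by
              apply mul_le_mul_of_nonneg_left hsinle (by positivity)
          _ = (c * |θ₂ - θ₁|) * |(m : ℝ) - n| := by ring
    _ = (c * |θ₂ - θ₁|) * ∑ m ∈ Finset.range M, ∑ n ∈ Finset.range M, |(m : ℝ) - n| := by
        rw [Finset.mul_sum]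
        apply Finset.sum_congr rfl
        intro m _
        rw [Finset.mul_sum]
    _ ≤ (c * |θ₂ - θ₁|) * ((M : ℝ) ^ 2 * ((M : ℝ) - 1) / 2) := by
        apply mul_le_mul_of_nonneg_left (sum_sum_abs_le M) (by positivity)
    _ = (((M : ℝ) - 1) * (M : ℝ) ^ 2 * Real.pi * Δ / lam) * |θ₂ - θ₁| := by
        rw [hc]; field_simp
end

section
/- Let a_k = 2π(Δ/λ)k and J₀(x) = (1/π)∫_{-π/2}^{π/2} exp(i x sin θ) dθ. For θ uniformly distributed on [-π/2, π/2], the expected PDAF satisfies E_θ[A(Φ,θ)] = M + 2 Σ_{n=1}^{M-1} Σ_{m=n+1}^{M} J₀(a_{m-n}) cos(φ_m - φ_n - a_{m-n} sin θ_h), where A(Φ,θ) = |Σ_{m=1}^M exp(i(φ_m - (2πΔ/λ)(m-1)(sin θ_h + sin θ)))|². -/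
open Complex Finset MeasureTheory intervalIntegral


noncomputable def Wfun (x : ℝ) : ℂ :=
  ∫ θ in (-(Real.pi/2))..(Real.pi/2), Complex.exp (Complex.I * ((x * Real.sin θ : ℝ) : ℂ))

lemma Wint (x a b : ℝ) :
    IntervalIntegrable (fun θ => Complex.exp (Complex.I * ((x * Real.sin θ : ℝ) : ℂ)))
      MeasureTheory.volume a b := by
  apply Continuous.intervalIntegrable
  fun_prop

lemma Wfun_even (x : ℝ) : Wfun (-x) = Wfun x := by
  unfold Wfun
  have h : ∀ θ : ℝ, Complex.exp (Complex.I * ((-x * Real.sin θ : ℝ) : ℂ))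
      = (fun t => Complex.exp (Complex.I * ((x * Real.sin t : ℝ) : ℂ))) (-θ) := by
    intro θ; simp only [Real.sin_neg]; push_cast; ring_nf
  simp_rw [h]
  rw [intervalIntegral.integral_comp_neg
    (fun t => Complex.exp (Complex.I * ((x * Real.sin t : ℝ) : ℂ)))]
  norm_num

lemma intervalIntegral_conj {f : ℝ → ℂ} {a b : ℝ} :
    ∫ x in a..b, (starRingEnd ℂ) (f x) = (starRingEnd ℂ) (∫ x in a..b, f x) := by
  simp [intervalIntegral, integral_conj]

lemma Wfun_conj (x : ℝ) : (starRingEnd ℂ) (Wfun x) = Wfun x := by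
  conv_lhs => rw [Wfun, ← intervalIntegral_conj]
  have h : ∀ θ : ℝ, (starRingEnd ℂ) (Complex.exp (Complex.I * ((x * Real.sin θ : ℝ) : ℂ)))
      = Complex.exp (Complex.I * ((-x * Real.sin θ : ℝ) : ℂ)) := by
    intro θ
    rw [← Complex.exp_conj]
    congr 1
    rw [map_mul, Complex.conj_I, Complex.conj_ofReal]
    push_cast
    ring
  simp_rw [h]
  exact Wfun_even x

lemma Wfun_real (x : ℝ) : Wfun x = ((Wfun x).re : ℂ) :=
  (Complex.conj_eq_iff_re.mp (Wfun_conj x)).symm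

lemma Wfun_zero : Wfun 0 = (Real.pi : ℂ) := by
  unfold Wfun
  norm_num

lemma sum_split (M : ℕ) (f : ℕ → ℕ → ℝ) (hsym : ∀ m n, f m n = f n m) :
    ∑ m ∈ Finset.range M, ∑ n ∈ Finset.range M, f m n
      = (∑ m ∈ Finset.range M, f m m)
        + 2 * ∑ n ∈ Finset.range M, ∑ m ∈ Finset.Ioo n M, f m n := by
  have h1 : ∀ m ∈ Finset.range M, ∑ n ∈ Finset.range M, f m n
      = (∑ n ∈ Finset.range m, f m n) + (f m m + ∑ n ∈ Finset.Ioo m M, f m n) := by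
    intro m hm
    rw [Finset.mem_range] at hm
    rw [Finset.range_eq_Ico, ← Finset.sum_Ico_consecutive _ (Nat.zero_le m) hm.le,
      Finset.sum_eq_sum_Ico_succ_bot hm, Finset.Ico_add_one_left_eq_Ioo, ← Finset.range_eq_Ico]
  rw [Finset.sum_congr rfl h1, Finset.sum_add_distrib, Finset.sum_add_distrib]
  have h2 : ∑ m ∈ Finset.range M, ∑ n ∈ Finset.range m, f m n
      = ∑ n ∈ Finset.range M, ∑ m ∈ Finset.Ioo n M, f m n := by
    apply Finset.sum_comm'
    intro m n; simp only [Finset.mem_range, Finset.mem_Ioo]; omega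
  have h3 : ∑ m ∈ Finset.range M, ∑ n ∈ Finset.Ioo m M, f m n
      = ∑ n ∈ Finset.range M, ∑ m ∈ Finset.Ioo n M, f m n :=
    Finset.sum_congr rfl fun x _ => Finset.sum_congr rfl fun y _ => hsym x y
  rw [h2, h3]; ring

set_option maxHeartbeats 1000000 in
/-- Closed form for the average PDAF over a uniformly distributed angle
`θ ~ U[-π/2, π/2]`:
`E_θ[A(Φ,θ)] = M + 2 Σ_{n<m} J₀(a_{m-n}) cos(φ_m - φ_n - a_{m-n} sin θ_h)`. -/
theorem expected_pdaf (M : ℕ) (hM : 0 < M) (Δ lam θh : ℝ) (hΔ : 0 < Δ) (hlam : 0 < lam)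
    (φ : ℕ → ℝ) (A : ℝ → ℝ)
    (hA : ∀ θ, A θ = ‖∑ m ∈ Finset.range M,
      Complex.exp (Complex.I *
        ((φ m - (2 * Real.pi * Δ / lam) * m * (Real.sin θh + Real.sin θ) : ℝ) : ℂ))‖ ^ 2)
    (a : ℕ → ℝ) (ha : ∀ k, a k = 2 * Real.pi * (Δ / lam) * k)
    (J0 : ℝ → ℝ)
    (hJ0 : ∀ x, J0 x = ((1 / (Real.pi : ℂ)) * ∫ θ in (-(Real.pi / 2))..(Real.pi / 2),
        Complex.exp (Complex.I * ((x * Real.sin θ : ℝ) : ℂ))).re) :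
    (1 / Real.pi) * ∫ θ in (-(Real.pi / 2))..(Real.pi / 2), A θ
      = M + 2 * ∑ n ∈ Finset.range M, ∑ m ∈ Finset.Ioo n M,
          J0 (a (m - n)) * Real.cos (φ m - φ n - a (m - n) * Real.sin θh) := by
  have hπ : Real.pi ≠ 0 := Real.pi_ne_zero
  set c : ℝ := 2 * Real.pi * Δ / lam with hc
  set α : ℕ → ℕ → ℝ := fun m n => φ m - φ n - c * ((m : ℝ) - n) * Real.sin θh with hα
  set β : ℕ → ℕ → ℝ := fun m n => -(c * ((m : ℝ) - n)) with hβ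
  -- J0 facts
  have hWc : ∀ x : ℝ, (1/(Real.pi:ℂ)) * Wfun x = (((1/Real.pi) * (Wfun x).re : ℝ) : ℂ) := by
    intro x; rw [Wfun_real x]; simp only [Complex.ofReal_re]; push_cast; ring
  have hJ0W : ∀ x : ℝ, J0 x = (1/Real.pi) * (Wfun x).re := by
    intro x
    rw [hJ0 x,
      show (∫ θ in (-(Real.pi/2))..(Real.pi/2),
        Complex.exp (Complex.I * ((x * Real.sin θ : ℝ) : ℂ))) = Wfun x from rfl,
      hWc x, Complex.ofReal_re]
  have hWJ : ∀ x : ℝ, (1/(Real.pi:ℂ)) * Wfun x = ((J0 x : ℝ) : ℂ) := by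
    intro x; rw [hWc x, hJ0W x]
  have hJ0even : ∀ x : ℝ, J0 (-x) = J0 x := by
    intro x; rw [hJ0W, hJ0W, Wfun_even]
  have hJ0zero : J0 0 = 1 := by
    rw [hJ0W, Wfun_zero, Complex.ofReal_re, one_div, inv_mul_cancel₀ hπ]
  -- pointwise expansion of A
  have hA2 : ∀ θ, A θ = (∑ m ∈ Finset.range M, ∑ n ∈ Finset.range M,
      Complex.exp (Complex.I * ((α m n : ℝ) : ℂ)) *
        Complex.exp (Complex.I * ((β m n * Real.sin θ : ℝ) : ℂ))).re := by
    intro θ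
    rw [hA]
    have habs : ∀ z : ℂ, ‖z‖ ^ 2 = (z * (starRingEnd ℂ) z).re := by
      intro z; rw [Complex.mul_conj, Complex.ofReal_re, Complex.sq_norm]
    rw [habs, map_sum, Finset.sum_mul_sum]
    congr 1
    refine Finset.sum_congr rfl fun m _ => Finset.sum_congr rfl fun n _ => ?_
    rw [← Complex.exp_conj, ← Complex.exp_add, ← Complex.exp_add]
    congr 1
    rw [map_mul, Complex.conj_I, Complex.conj_ofReal]
    simp only [hα, hβ]
    push_cast
    ring
  -- the integral of the double sum
  have hterm : ∀ (m n : ℕ), IntervalIntegrable (fun θ =>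
      Complex.exp (Complex.I * ((α m n : ℝ) : ℂ)) *
        Complex.exp (Complex.I * ((β m n * Real.sin θ : ℝ) : ℂ)))
      MeasureTheory.volume (-(Real.pi/2)) (Real.pi/2) := by
    intro m n
    exact (Wint (β m n) _ _).const_mul _
  have hTint : IntervalIntegrable (fun θ => ∑ m ∈ Finset.range M, ∑ n ∈ Finset.range M,
      Complex.exp (Complex.I * ((α m n : ℝ) : ℂ)) *
        Complex.exp (Complex.I * ((β m n * Real.sin θ : ℝ) : ℂ)))
      MeasureTheory.volume (-(Real.pi/2)) (Real.pi/2) := by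
    apply Continuous.intervalIntegrable
    apply continuous_finset_sum
    intro m _
    apply continuous_finset_sum
    intro n _
    fun_prop
  have hre : (∫ θ in (-(Real.pi/2))..(Real.pi/2), A θ)
      = (∫ θ in (-(Real.pi/2))..(Real.pi/2), (∑ m ∈ Finset.range M, ∑ n ∈ Finset.range M,
          Complex.exp (Complex.I * ((α m n : ℝ) : ℂ)) *
            Complex.exp (Complex.I * ((β m n * Real.sin θ : ℝ) : ℂ)))).re := by
    simp only [hA2]
    rw [← Complex.reCLM_apply,
      ← ContinuousLinearMap.intervalIntegral_comp_comm Complex.reCLM hTint]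
    simp only [Complex.reCLM_apply]
  have hT : (∫ θ in (-(Real.pi/2))..(Real.pi/2), (∑ m ∈ Finset.range M, ∑ n ∈ Finset.range M,
        Complex.exp (Complex.I * ((α m n : ℝ) : ℂ)) *
          Complex.exp (Complex.I * ((β m n * Real.sin θ : ℝ) : ℂ))))
      = ∑ m ∈ Finset.range M, ∑ n ∈ Finset.range M,
          Complex.exp (Complex.I * ((α m n : ℝ) : ℂ)) * Wfun (β m n) := by
    rw [intervalIntegral.integral_finset_sum (fun m _ => by
      apply Continuous.intervalIntegrable
      apply continuous_finset_sum
      intro n _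
      fun_prop)]
    refine Finset.sum_congr rfl fun m _ => ?_
    rw [intervalIntegral.integral_finset_sum (fun n _ => hterm m n)]
    refine Finset.sum_congr rfl fun n _ => ?_
    rw [intervalIntegral.integral_const_mul]
    rfl
  have hmain : (1 / Real.pi) * ∫ θ in (-(Real.pi / 2))..(Real.pi / 2), A θ
      = ∑ m ∈ Finset.range M, ∑ n ∈ Finset.range M,
          J0 (c * ((m:ℝ) - n)) * Real.cos (α m n) := by
    rw [hre, hT]
    have : (1 / Real.pi) * (∑ m ∈ Finset.range M, ∑ n ∈ Finset.range M,
        Complex.exp (Complex.I * ((α m n : ℝ) : ℂ)) * Wfun (β m n)).re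
        = ((1/(Real.pi:ℂ)) * ∑ m ∈ Finset.range M, ∑ n ∈ Finset.range M,
          Complex.exp (Complex.I * ((α m n : ℝ) : ℂ)) * Wfun (β m n)).re := by
      rw [show (1/(Real.pi:ℂ)) = ((1/Real.pi : ℝ) : ℂ) by push_cast; ring,
        Complex.re_ofReal_mul]
    rw [this, Finset.mul_sum]
    simp_rw [Finset.mul_sum]
    rw [Complex.re_sum]
    refine Finset.sum_congr rfl fun m _ => ?_
    rw [Complex.re_sum]
    refine Finset.sum_congr rfl fun n _ => ?_
    rw [show (1/(Real.pi:ℂ)) * (Complex.exp (Complex.I * ((α m n : ℝ) : ℂ)) * Wfun (β m n))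
        = Complex.exp (Complex.I * ((α m n : ℝ) : ℂ)) * ((1/(Real.pi:ℂ)) * Wfun (β m n)) by ring,
      hWJ (β m n)]
    have hβe : J0 (β m n) = J0 (c * ((m:ℝ) - n)) := by
      rw [hβ]; exact hJ0even _
    rw [hβe, mul_comm Complex.I ((α m n : ℝ) : ℂ)]
    simp [Complex.mul_re, Complex.exp_ofReal_mul_I_re, Complex.exp_ofReal_mul_I_im]
    ring
  rw [hmain, sum_split M _ (by
    intro m n
    have h1 : c * ((n:ℝ) - m) = -(c * ((m:ℝ) - n)) := by ring
    have h2 : α n m = -(α m n) := by simp only [hα]; ring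
    rw [h1, h2, hJ0even, Real.cos_neg])]
  have hdiag : ∑ m ∈ Finset.range M, J0 (c * ((m:ℝ) - m)) * Real.cos (α m m) = M := by
    have : ∀ m : ℕ, J0 (c * ((m:ℝ) - m)) * Real.cos (α m m) = 1 := by
      intro m
      have h1 : c * ((m:ℝ) - m) = 0 := by ring
      have h2 : α m m = 0 := by simp only [hα]; ring
      rw [h1, h2, hJ0zero, Real.cos_zero, one_mul]
    rw [Finset.sum_congr rfl fun m _ => this m, Finset.sum_const, Finset.card_range,
      nsmul_eq_mul, mul_one]
  rw [hdiag]
  congr 1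
  congr 1
  refine Finset.sum_congr rfl fun n _ => Finset.sum_congr rfl fun m hm => ?_
  rw [Finset.mem_Ioo] at hm
  have hnm : (n : ℝ) ≤ m := by exact_mod_cast hm.1.le
  have hca : c * ((m:ℝ) - n) = a (m - n) := by
    rw [ha, Nat.cast_sub hm.1.le, hc]; ring
  rw [hca, hα]
  simp only []
  rw [hca]
end

section
/- (Chu/Zadoff–Chu perfect autocorrelation, even length) Let M be an even positive integer and q an integer with gcd(q, M) = 1, and define Ψ_m = exp(i π q (m-1)²/M) for m = 1,…,M. Then the periodic (cyclic) autocorrelation R[τ] = Σ_{m=0}^{M-1} Ψ_{m+1} conj(Ψ_{((m+τ) mod M)+1}) equals M if τ ≡ 0 (mod M) and 0 otherwise. -/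
open Complex Finset

/-- Chu (Zadoff–Chu) sequences of even length `M` with `gcd(q,M)=1` have perfect
cyclic autocorrelation: `R[τ] = M` if `M ∣ τ` and `R[τ] = 0` otherwise. -/
theorem chu_perfect_cyclic_acf (M : ℕ) (hM : 0 < M) (hMeven : Even M)
    (q : ℤ) (hq : Int.gcd q (M : ℤ) = 1) (Ψ : ℕ → ℂ)
    (hΨ : ∀ m, Ψ m = Complex.exp (Complex.I *
      ((Real.pi * (q : ℝ) * (m : ℝ) ^ 2 / (M : ℝ) : ℝ) : ℂ)))
    (R : ℕ → ℂ)
    (hR : ∀ τ, R τ = ∑ m ∈ Finset.range M, Ψ m * (starRingEnd ℂ) (Ψ ((m + τ) % M))) :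
    ∀ τ, (τ % M = 0 → R τ = (M : ℂ)) ∧ (τ % M ≠ 0 → R τ = 0) := by
  obtain ⟨e, he⟩ := hMeven
  have he0 : 0 < e := by omega
  have heC : (M : ℂ) = 2 * e := by push_cast [he]; ring
  have heC0 : (e : ℂ) ≠ 0 := by exact_mod_cast he0.ne'
  have hMC0 : (M : ℂ) ≠ 0 := by exact_mod_cast hM.ne'
  intro τ
  set c : ℂ := Complex.exp (-(Complex.I * Real.pi * q * τ ^ 2 / M)) with hc_def
  set z : ℂ := Complex.exp (2 * Real.pi * Complex.I * (-((q : ℂ) * τ) / M)) with hz_def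
  have key : ∀ m, Ψ m * (starRingEnd ℂ) (Ψ ((m + τ) % M)) = c * z ^ m := by
    intro m
    set n := (m + τ) % M with hn
    set k := (m + τ) / M with hk
    have hdm : (n : ℤ) = (m : ℤ) + τ - M * k := by
      have h0 := Nat.div_add_mod (m + τ) M
      rw [← hk, ← hn] at h0
      omega
    have hnC : (n : ℂ) = (m : ℂ) + τ - M * k := by exact_mod_cast hdm
    rw [hΨ m, hΨ n, ← Complex.exp_conj, ← Complex.exp_add]
    have hconj : (starRingEnd ℂ) (Complex.I *
        ((Real.pi * (q : ℝ) * (n : ℝ) ^ 2 / (M : ℝ) : ℝ) : ℂ)) =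
        -(Complex.I * ((Real.pi * (q : ℝ) * (n : ℝ) ^ 2 / (M : ℝ) : ℝ) : ℂ)) := by
      simp [Complex.conj_I]
    rw [hconj, hc_def, hz_def, ← Complex.exp_nat_mul, ← Complex.exp_add]
    rw [Complex.exp_eq_exp_iff_exists_int]
    refine ⟨q * k * ((m : ℤ) + τ - e * k), ?_⟩
    push_cast
    rw [hnC, heC]
    field_simp
    ring
  rw [hR τ]
  simp only [key]
  rw [← Finset.mul_sum]
  constructor
  · intro hτ
    obtain ⟨t, ht⟩ := Nat.dvd_of_mod_eq_zero hτ
    have hc1 : c = 1 := by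
      rw [hc_def, show -(Complex.I * Real.pi * q * (τ : ℂ) ^ 2 / M) =
          ((-(q * e * t ^ 2) : ℤ)) * (2 * Real.pi * Complex.I) by
        push_cast [ht, he]
        have h2 : ((e : ℂ) + e) ≠ 0 := by rw [← two_mul]; exact mul_ne_zero two_ne_zero heC0
        field_simp
        ring]
      exact Complex.exp_int_mul_two_pi_mul_I _
    have hz1 : z = 1 := by
      rw [hz_def, show 2 * (Real.pi : ℂ) * Complex.I * (-((q : ℂ) * τ) / M) =
          ((-(q * t) : ℤ)) * (2 * Real.pi * Complex.I) by
        push_cast [ht]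
        field_simp]
      exact Complex.exp_int_mul_two_pi_mul_I _
    simp [hc1, hz1]
  · intro hτ
    have hz1 : z ≠ 1 := by
      intro h
      rw [hz_def, Complex.exp_eq_one_iff] at h
      obtain ⟨j, hj⟩ := h
      have h2 : (2 * Real.pi * Complex.I) * (-((q : ℂ) * τ) / M) =
          (2 * Real.pi * Complex.I) * j := by linear_combination hj
      have h3 : -((q : ℂ) * τ) / M = j :=
        mul_left_cancel₀ Complex.two_pi_I_ne_zero h2
      have h4 : -((q : ℂ) * τ) = j * M := by
        field_simp at h3; linear_combination h3
      have h5 : -(q * (τ : ℤ)) = j * M := by exact_mod_cast h4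
      have h6 : (M : ℤ) ∣ q * τ := ⟨-j, by linarith⟩
      have hcop : IsCoprime (M : ℤ) q := by
        rw [Int.isCoprime_iff_gcd_eq_one, Int.gcd_comm]; exact hq
      have h7 : (M : ℤ) ∣ (τ : ℤ) := hcop.dvd_of_dvd_mul_left h6
      have h8 : M ∣ τ := by exact_mod_cast h7
      obtain ⟨s, hs⟩ := h8
      omega
    have hzM : z ^ M = 1 := by
      rw [hz_def, ← Complex.exp_nat_mul,
        show (M : ℂ) * (2 * Real.pi * Complex.I * (-((q : ℂ) * τ) / M)) =
          ((-(q * τ) : ℤ)) * (2 * Real.pi * Complex.I) by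
        push_cast; field_simp]
      exact Complex.exp_int_mul_two_pi_mul_I _
    rw [geom_sum_eq hz1, hzM, sub_self, zero_div, mul_zero]
end
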